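/- Fix samples ϑ⁽¹⁾, …, ϑ⁽ℓ⁾ ∈ ℝ^m with ℓ ≥ 1, a Wasserstein radius ε ≥ 0, and define h(σ, λ) = λε + (1/ℓ)·Σ_{j=1}^{ℓ} max(0, 1 − λ·max(0, σ − ‖ϑ⁽ʲ⁾‖_∞)) for σ ≥ 0 and λ ≥ 0, and let M = max_{1 ≤ j ≤ ℓ} ‖ϑ⁽ʲ⁾‖_∞. Then for every σ > M one has inf_{λ ≥ 0} h(σ, λ) ≤ ε/(σ − M); in particular inf_{λ ≥ 0} h(σ, λ) → 0 as σ → ∞. -/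
import Mathlib


/-- For fixed samples `ϑ⁽¹⁾, …, ϑ⁽ℓ⁾ ∈ ℝ^m` (sup norm `‖·‖_∞`) with `ℓ ≥ 1`, Wasserstein
radius `ε ≥ 0`, `h(σ, λ) = λε + (1/ℓ)·∑_j max(0, 1 − λ·max(0, σ − ‖ϑ⁽ʲ⁾‖_∞))` and
`M = max_j ‖ϑ⁽ʲ⁾‖_∞`: for every `σ > M`, `inf_{λ ≥ 0} h(σ, λ) ≤ ε/(σ − M)`; in particular
`inf_{λ ≥ 0} h(σ, λ) → 0` as `σ → ∞`. -/
theorem stmt7 (m ℓ : ℕ) (hℓ : 1 ≤ ℓ) (ϑ : Fin ℓ → (Fin m → ℝ)) (ε : ℝ) (hε : 0 ≤ ε) :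
    (∀ σ : ℝ,
      (Finset.univ.sup' (Finset.univ_nonempty_iff.mpr ⟨⟨0, hℓ⟩⟩) fun j => ‖ϑ j‖) < σ →
      sInf {y : ℝ | ∃ lam : ℝ, 0 ≤ lam ∧
          y = lam * ε + (1 / (ℓ : ℝ)) * ∑ j, max 0 (1 - lam * max 0 (σ - ‖ϑ j‖))}
        ≤ ε / (σ - Finset.univ.sup' (Finset.univ_nonempty_iff.mpr ⟨⟨0, hℓ⟩⟩) fun j => ‖ϑ j‖)) ∧
    Filter.Tendsto
      (fun σ : ℝ =>
        sInf {y : ℝ | ∃ lam : ℝ, 0 ≤ lam ∧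
          y = lam * ε + (1 / (ℓ : ℝ)) * ∑ j, max 0 (1 - lam * max 0 (σ - ‖ϑ j‖))})
      Filter.atTop (nhds 0) := by
  set M : ℝ := Finset.univ.sup' (Finset.univ_nonempty_iff.mpr ⟨⟨0, hℓ⟩⟩) fun j => ‖ϑ j‖ with hM
  have hnonneg : ∀ σ : ℝ, ∀ y ∈ {y : ℝ | ∃ lam : ℝ, 0 ≤ lam ∧
      y = lam * ε + (1 / (ℓ : ℝ)) * ∑ j, max 0 (1 - lam * max 0 (σ - ‖ϑ j‖))}, 0 ≤ y := by
    intro σ y hy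
    obtain ⟨lam, hlam, rfl⟩ := hy
    have h1 : 0 ≤ lam * ε := mul_nonneg hlam hε
    have h2 : (0:ℝ) ≤ ∑ j, max 0 (1 - lam * max 0 (σ - ‖ϑ j‖)) :=
      Finset.sum_nonneg fun j _ => le_max_left _ _
    positivity
  have hbdd : ∀ σ : ℝ, BddBelow {y : ℝ | ∃ lam : ℝ, 0 ≤ lam ∧
      y = lam * ε + (1 / (ℓ : ℝ)) * ∑ j, max 0 (1 - lam * max 0 (σ - ‖ϑ j‖))} :=
    fun σ => ⟨0, fun y hy => hnonneg σ y hy⟩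
  have key : ∀ σ : ℝ, M < σ →
      sInf {y : ℝ | ∃ lam : ℝ, 0 ≤ lam ∧
          y = lam * ε + (1 / (ℓ : ℝ)) * ∑ j, max 0 (1 - lam * max 0 (σ - ‖ϑ j‖))}
        ≤ ε / (σ - M) := by
    intro σ hσ
    have hpos : 0 < σ - M := sub_pos.mpr hσ
    apply csInf_le (hbdd σ)
    refine ⟨1 / (σ - M), by positivity, ?_⟩
    have hsum : ∀ j : Fin ℓ, max 0 (1 - (1 / (σ - M)) * max 0 (σ - ‖ϑ j‖)) = 0 := by
      intro j
      have hjM : ‖ϑ j‖ ≤ M := hM ▸ Finset.le_sup' (fun j => ‖ϑ j‖) (Finset.mem_univ j)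
      have h1 : σ - M ≤ σ - ‖ϑ j‖ := by linarith
      have h2 : max 0 (σ - ‖ϑ j‖) = σ - ‖ϑ j‖ := max_eq_right (by linarith)
      rw [h2]
      have h3 : (1:ℝ) ≤ (1 / (σ - M)) * (σ - ‖ϑ j‖) := by
        rw [div_mul_eq_mul_div, one_mul, le_div_iff₀ hpos, one_mul]
        exact h1
      exact max_eq_left (by linarith)
    rw [Finset.sum_congr rfl fun j _ => hsum j]
    simp only [Finset.sum_const_zero, mul_zero, add_zero]
    ring
  refine ⟨key, ?_⟩
  have hlim : Filter.Tendsto (fun σ : ℝ => ε / (σ - M)) Filter.atTop (nhds 0) :=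
    Filter.Tendsto.div_atTop tendsto_const_nhds
      (Filter.tendsto_atTop_add_const_right _ (-M) Filter.tendsto_id)
  refine squeeze_zero' ?_ ?_ hlim
  · exact Filter.Eventually.of_forall fun σ => Real.sInf_nonneg (hnonneg σ)
  · filter_upwards [Filter.eventually_gt_atTop M] with σ hσ using key σ hσ
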